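/- arXiv:math/0203245 — 2 statements merged into one kernel-verified Lean document; each statement's English description precedes it below -/
import Mathlib

section
/- Schur–Weyl reciprocity (spanning part): if dim V ≥ r (or in general), the algebra End_{GL(V)}(V^{⊗r}) of GL(V)-equivariant endomorphisms of V^{⊗r} is spanned by the operators Φ(ρ) for ρ ∈ S_r, where Φ(ρ) permutes tensor factors. -/
open PiTensorProduct
open scoped TensorProduct

/-- The operator `Φ(ρ)` on `V^{⊗r}` permuting tensor factors:
`Φ(ρ)(e₁ ⊗ ⋯ ⊗ e_r) = e_{ρ⁻¹(1)} ⊗ ⋯ ⊗ e_{ρ⁻¹(r)}`. -/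
noncomputable def permTensorMap (k : Type*) [Field k] (V : Type*) [AddCommGroup V]
    [Module k V] (r : ℕ) (ρ : Equiv.Perm (Fin r)) :
    (⨂[k] (_ : Fin r), V) →ₗ[k] ⨂[k] (_ : Fin r), V :=
  (PiTensorProduct.reindex k (fun _ : Fin r => V) ρ).toLinearMap

namespace SchurWeylAux

section Fieldk
variable {k : Type*} [Field k]

theorem maschke {M : Type*} [AddCommGroup M] [Module k M] {G : Type*} [Group G] [Fintype G]
    (hc : (Fintype.card G : k) ≠ 0) (ρ : G →* Module.End k M)
    (p : Submodule k M) (hp : ∀ g x, x ∈ p → ρ g x ∈ p) :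
    ∃ π : M →ₗ[k] M, (∀ x, π x ∈ p) ∧ (∀ x ∈ p, π x = x) ∧ ∀ g, π ∘ₗ ρ g = ρ g ∘ₗ π := by
  obtain ⟨q, hq⟩ := Submodule.exists_isCompl p
  set π₀ : M →ₗ[k] M := p.subtype ∘ₗ p.linearProjOfIsCompl q hq with hπ₀
  have hπ₀mem : ∀ x, π₀ x ∈ p := fun x => (p.linearProjOfIsCompl q hq x).2
  have hπ₀fix : ∀ x ∈ p, π₀ x = x := by
    intro x hx
    simp [hπ₀, Submodule.linearProjOfIsCompl_apply_left hq ⟨x, hx⟩]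
    exact congrArg Subtype.val (Submodule.linearProjOfIsCompl_apply_left hq ⟨x, hx⟩)
  set c : k := (Fintype.card G : k)⁻¹ with hcdef
  refine ⟨c • ∑ g : G, ρ g⁻¹ ∘ₗ π₀ ∘ₗ ρ g, ?_, ?_, ?_⟩
  · intro x
    simp only [LinearMap.smul_apply, LinearMap.sum_apply, LinearMap.comp_apply]
    exact Submodule.smul_mem _ _ (Submodule.sum_mem _ fun g _ =>
      hp g⁻¹ _ (hπ₀mem _))
  · intro x hx
    have : ∀ g : G, (ρ g⁻¹ ∘ₗ π₀ ∘ₗ ρ g) x = x := by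
      intro g
      have h1 : ρ g x ∈ p := hp g x hx
      have : (ρ g⁻¹) ((ρ g) x) = x := by
        have := LinearMap.congr_fun (congrArg (fun h => (h : Module.End k M)) (ρ.map_mul g⁻¹ g)) x
        simp only [inv_mul_cancel, _root_.map_one] at this
        simpa [Module.End.mul_apply] using this.symm
      simp [LinearMap.comp_apply, hπ₀fix _ h1, this]
    simp only [LinearMap.smul_apply, LinearMap.sum_apply, this, Finset.sum_const,
      Finset.card_univ]
    rw [← Nat.cast_smul_eq_nsmul k, smul_smul, hcdef, inv_mul_cancel₀ hc, one_smul]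
  · intro h
    ext x
    simp only [LinearMap.smul_apply, LinearMap.comp_apply, LinearMap.sum_apply, map_smul,
      map_sum]
    congr 1
    refine Fintype.sum_equiv (Equiv.mulRight h) _ _ ?_
    intro g
    simp only [Equiv.coe_mulRight]
    have hcomp : ∀ a b : G, ∀ y : M, ρ a (ρ b y) = ρ (a * b) y := by
      intro a b y
      rw [ρ.map_mul]; rfl
    rw [hcomp, hcomp]
    congr 1
    group

theorem commute_span {M : Type*} [AddCommGroup M] [Module k M]
    {s : Set (M →ₗ[k] M)} {T : M →ₗ[k] M}
    (h : ∀ f ∈ s, T ∘ₗ f = f ∘ₗ T) :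
    ∀ a ∈ Submodule.span k s, T ∘ₗ a = a ∘ₗ T := by
  intro a ha
  induction ha using Submodule.span_induction with
  | mem f hf => exact h f hf
  | zero => simp
  | add f g _ _ hf hg => simp [LinearMap.comp_add, LinearMap.add_comp, hf, hg]
  | smul c f _ hf => simp [LinearMap.comp_smul, LinearMap.smul_comp, hf]

theorem ie_coeff {r : ℕ} (q : Fin r → Fin r) :
    (∑ S ∈ (Finset.univ : Finset (Fin r)).powerset,
        if (∀ i, q i ∈ S) then ((-1:k)^(r - S.card)) else 0)
      = if Function.Bijective q then 1 else 0 := by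
  classical
  set T : Finset (Fin r) := Finset.image q Finset.univ with hT
  have hcond : ∀ S : Finset (Fin r), (∀ i, q i ∈ S) ↔ T ⊆ S := by
    intro S
    rw [hT, Finset.image_subset_iff]
    exact ⟨fun h x _ => h x, fun h x => h x (Finset.mem_univ x)⟩
  have step1 : (∑ S ∈ (Finset.univ : Finset (Fin r)).powerset,
      if (∀ i, q i ∈ S) then ((-1:k)^(r - S.card)) else 0)
      = ∑ S ∈ (Finset.univ : Finset (Fin r)).powerset.filter (fun S => T ⊆ S),
          ((-1:k)^(r - S.card)) := by
    rw [Finset.sum_filter]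
    exact Finset.sum_congr rfl fun S _ => if_congr (hcond S) rfl rfl
  rw [step1]
  -- reindex by U = S \ T
  have step2 : ∑ S ∈ (Finset.univ : Finset (Fin r)).powerset.filter (fun S => T ⊆ S),
      ((-1:k)^(r - S.card))
      = ∑ U ∈ Tᶜ.powerset, ((-1:k)^(Tᶜ.card - U.card)) := by
    refine Finset.sum_bij' (fun S _ => S \ T) (fun U _ => T ∪ U) ?_ ?_ ?_ ?_ ?_
    · intro S hS
      rw [Finset.mem_filter] at hS
      rw [Finset.mem_powerset]
      intro a ha
      rw [Finset.mem_sdiff] at ha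
      simpa using ha.2
    · intro U hU
      rw [Finset.mem_powerset] at hU
      rw [Finset.mem_filter, Finset.mem_powerset]
      exact ⟨Finset.subset_univ _, Finset.subset_union_left⟩
    · intro S hS
      rw [Finset.mem_filter] at hS
      exact Finset.union_sdiff_of_subset hS.2
    · intro U hU
      rw [Finset.mem_powerset] at hU
      refine Finset.union_sdiff_cancel_left ?_
      exact Finset.disjoint_left.mpr fun a haT haU => (Finset.mem_compl.mp (hU haU)) haT
    · intro S hS
      rw [Finset.mem_filter] at hS
      have hdis : Disjoint T (S \ T) := Finset.disjoint_sdiff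
      have hcard : S.card = T.card + (S \ T).card := by
        rw [← Finset.card_union_of_disjoint hdis, Finset.union_sdiff_of_subset hS.2]
      congr 1
      rw [hcard, Finset.card_compl, Fintype.card_fin, Nat.sub_sub]
  rw [step2]
  have hpow : ∀ U ∈ Tᶜ.powerset, ((-1:k)^(Tᶜ.card - U.card))
      = (-1:k)^(Tᶜ.card) * (-1:k)^(U.card) := by
    intro U hU
    rw [Finset.mem_powerset] at hU
    have hu : U.card ≤ Tᶜ.card := Finset.card_le_card hU
    have h1 : (-1:k)^(Tᶜ.card - U.card) * (-1:k)^(U.card) = (-1:k)^(Tᶜ.card) := by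
      rw [← pow_add, Nat.sub_add_cancel hu]
    have h2 : ((-1:k)^U.card) * ((-1:k)^U.card) = 1 := by
      rw [← mul_pow]; norm_num
    calc (-1:k)^(Tᶜ.card - U.card)
        = (-1:k)^(Tᶜ.card - U.card) * (((-1:k)^U.card) * ((-1:k)^U.card)) := by
          rw [h2, mul_one]
      _ = ((-1:k)^(Tᶜ.card - U.card) * (-1:k)^U.card) * (-1:k)^U.card := by ring
      _ = (-1:k)^(Tᶜ.card) * (-1:k)^(U.card) := by rw [h1]
  rw [Finset.sum_congr rfl hpow, ← Finset.mul_sum]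
  have hsum : (∑ U ∈ Tᶜ.powerset, (-1:k)^(U.card))
      = if Tᶜ = ∅ then 1 else 0 := by
    have h0 := Finset.sum_powerset_neg_one_pow_card (x := Tᶜ) (α := Fin r)
    exact_mod_cast congrArg (fun z : ℤ => (z : k)) h0
  rw [hsum]
  have hbij : (Tᶜ = ∅) ↔ Function.Bijective q := by
    rw [Finset.compl_eq_empty_iff, hT]
    constructor
    · intro h
      rw [← Finite.surjective_iff_bijective]
      intro y
      have hy : y ∈ (Finset.univ : Finset (Fin r)) := Finset.mem_univ y
      rw [← h] at hy
      simpa using hy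
    · intro h
      apply Finset.eq_univ_iff_forall.mpr
      intro y
      obtain ⟨x, hx⟩ := h.2 y
      exact Finset.mem_image.mpr ⟨x, Finset.mem_univ x, hx⟩
  by_cases hb : Function.Bijective q
  · rw [if_pos (hbij.mpr hb), if_pos hb]
    have : Tᶜ.card = 0 := by rw [hbij.mpr hb]; simp
    rw [this, pow_zero, mul_one]
  · rw [if_neg (fun h => hb (hbij.mp h)), if_neg hb, mul_zero]


theorem sum_perm_tprod {r : ℕ} {M : Type*} [AddCommGroup M] [Module k M] (f : Fin r → M) :
    ∑ σ : Equiv.Perm (Fin r), tprod k (fun i => f (σ.symm i))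
      = ∑ S ∈ (Finset.univ : Finset (Fin r)).powerset,
          ((-1:k)^(r - S.card)) • tprod k (fun _ : Fin r => ∑ i ∈ S, f i) := by
  classical
  have expand : ∀ S : Finset (Fin r),
      tprod k (fun _ : Fin r => ∑ i ∈ S, f i)
        = ∑ q ∈ Fintype.piFinset (fun _ : Fin r => S), tprod k (fun i => f (q i)) :=
    fun S => MultilinearMap.map_sum_finset (PiTensorProduct.tprod k) (fun _ j => f j) (fun _ => S)
  have pif : ∀ S : Finset (Fin r), Fintype.piFinset (fun _ : Fin r => S)
      = Finset.univ.filter (fun q : Fin r → Fin r => ∀ i, q i ∈ S) := by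
    intro S; ext q; simp [Fintype.mem_piFinset]
  calc
    ∑ σ : Equiv.Perm (Fin r), tprod k (fun i => f (σ.symm i))
      = ∑ q ∈ Finset.univ.filter (fun q : Fin r → Fin r => Function.Bijective q),
          tprod k (fun i => f (q i)) := by
        refine Finset.sum_bij' (fun σ _ => ⇑σ.symm)
          (fun q hq => (Equiv.ofBijective q (Finset.mem_filter.mp hq).2).symm) ?_ ?_ ?_ ?_ ?_
        · intro σ _
          exact Finset.mem_filter.mpr ⟨Finset.mem_univ _, σ.symm.bijective⟩
        · intro q _; exact Finset.mem_univ _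
        · intro σ _
          apply Equiv.ext
          intro x
          rw [Equiv.symm_apply_eq]
          simp
        · intro q hq
          funext x
          simp
        · intro σ _; rfl
    _ = ∑ q : Fin r → Fin r,
          (if Function.Bijective q then (1:k) else 0) • tprod k (fun i => f (q i)) := by
        rw [Finset.sum_filter]
        refine Finset.sum_congr rfl fun q _ => ?_
        split <;> simp
    _ = ∑ q : Fin r → Fin r,
          (∑ S ∈ (Finset.univ : Finset (Fin r)).powerset,
            if (∀ i, q i ∈ S) then ((-1:k)^(r - S.card)) else 0) • tprod k (fun i => f (q i)) := by
        refine Finset.sum_congr rfl fun q _ => ?_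
        rw [ie_coeff]
    _ = ∑ q : Fin r → Fin r, ∑ S ∈ (Finset.univ : Finset (Fin r)).powerset,
          (if (∀ i, q i ∈ S) then ((-1:k)^(r - S.card)) else 0) • tprod k (fun i => f (q i)) := by
        refine Finset.sum_congr rfl fun q _ => ?_
        rw [Finset.sum_smul]
    _ = ∑ S ∈ (Finset.univ : Finset (Fin r)).powerset, ∑ q : Fin r → Fin r,
          (if (∀ i, q i ∈ S) then ((-1:k)^(r - S.card)) else 0) • tprod k (fun i => f (q i)) :=
        Finset.sum_comm
    _ = ∑ S ∈ (Finset.univ : Finset (Fin r)).powerset,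
          ((-1:k)^(r - S.card)) • tprod k (fun _ : Fin r => ∑ i ∈ S, f i) := by
        refine Finset.sum_congr rfl fun S _ => ?_
        rw [expand S, pif S, Finset.smul_sum, Finset.sum_filter]
        refine Finset.sum_congr rfl fun q _ => ?_
        split <;> simp

theorem sum_perm_mem_span {r : ℕ} {M : Type*} [AddCommGroup M] [Module k M]
    (t : ⨂[k] (_ : Fin r), M) :
    ∑ σ : Equiv.Perm (Fin r), (PiTensorProduct.reindex k (fun _ : Fin r => M) σ) t
      ∈ Submodule.span k {u : ⨂[k] (_ : Fin r), M | ∃ x : M, tprod k (fun _ : Fin r => x) = u} := by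
  classical
  set Q := Submodule.span k {u : ⨂[k] (_ : Fin r), M | ∃ x : M, tprod k (fun _ : Fin r => x) = u}
    with hQ
  set L : (⨂[k] (_ : Fin r), M) →ₗ[k] ⨂[k] (_ : Fin r), M :=
    ∑ σ : Equiv.Perm (Fin r), (PiTensorProduct.reindex k (fun _ : Fin r => M) σ).toLinearMap
    with hL
  have hLt : ∑ σ : Equiv.Perm (Fin r), (PiTensorProduct.reindex k (fun _ : Fin r => M) σ) t
      = L t := by
    rw [hL, LinearMap.sum_apply]
    rfl
  rw [hLt]
  have key : (⊤ : Submodule k (⨂[k] (_ : Fin r), M)) ≤ Q.comap L := by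
    rw [← PiTensorProduct.span_tprod_eq_top, Submodule.span_le]
    rintro _ ⟨f, rfl⟩
    rw [SetLike.mem_coe, Submodule.mem_comap]
    have : L (tprod k f) = ∑ σ : Equiv.Perm (Fin r), tprod k (fun i => f (σ.symm i)) := by
      rw [hL, LinearMap.sum_apply]
      exact Finset.sum_congr rfl fun σ _ => PiTensorProduct.reindex_tprod σ f
    rw [this, sum_perm_tprod]
    exact Submodule.sum_mem _ fun S _ =>
      Submodule.smul_mem _ _ (Submodule.subset_span ⟨∑ i ∈ S, f i, rfl⟩)
  exact key (Submodule.mem_top)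

section ModV
variable {V : Type*} [AddCommGroup V] [Module k V] {r : ℕ}

theorem permTensorMap_one : permTensorMap k V r 1 = LinearMap.id := by
  have : (1 : Equiv.Perm (Fin r)) = Equiv.refl (Fin r) := rfl
  rw [permTensorMap, this, PiTensorProduct.reindex_refl]
  rfl

theorem permTensorMap_mul (σ τ : Equiv.Perm (Fin r)) :
    permTensorMap k V r (σ * τ) = permTensorMap k V r σ ∘ₗ permTensorMap k V r τ := by
  have : (σ * τ : Equiv.Perm (Fin r)) = (τ : Equiv (Fin r) (Fin r)).trans σ := rfl
  simp only [permTensorMap, this, ← PiTensorProduct.reindex_trans]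
  rfl

theorem permTensorMap_inv_comp (σ : Equiv.Perm (Fin r)) :
    permTensorMap k V r σ ∘ₗ permTensorMap k V r σ⁻¹ = LinearMap.id := by
  rw [← permTensorMap_mul, mul_inv_cancel, permTensorMap_one]

theorem permTensorMap_conj (σ : Equiv.Perm (Fin r)) (f : Fin r → (V →ₗ[k] V)) :
    permTensorMap k V r σ ∘ₗ PiTensorProduct.map f
      = PiTensorProduct.map (fun i => f (σ.symm i)) ∘ₗ permTensorMap k V r σ := by
  ext v
  simp [permTensorMap, PiTensorProduct.map_tprod, PiTensorProduct.reindex_tprod]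

theorem piTensorHomMap_reindex (σ : Equiv.Perm (Fin r)) (t : ⨂[k] (_ : Fin r), (V →ₗ[k] V)) :
    piTensorHomMap ((PiTensorProduct.reindex k (fun _ : Fin r => (V →ₗ[k] V)) σ) t)
      = permTensorMap k V r σ ∘ₗ piTensorHomMap t ∘ₗ permTensorMap k V r σ⁻¹ := by
  induction t using PiTensorProduct.induction_on with
  | smul_tprod c f =>
      rw [map_smul, map_smul, PiTensorProduct.reindex_tprod, piTensorHomMap_tprod_eq_map,
        map_smul, piTensorHomMap_tprod_eq_map, LinearMap.smul_comp, LinearMap.comp_smul]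
      congr 1
      calc PiTensorProduct.map (fun i => f (σ.symm i))
          = PiTensorProduct.map (fun i => f (σ.symm i)) ∘ₗ
              (permTensorMap k V r σ ∘ₗ permTensorMap k V r σ⁻¹) := by
            rw [permTensorMap_inv_comp]; rfl
        _ = (PiTensorProduct.map (fun i => f (σ.symm i)) ∘ₗ permTensorMap k V r σ)
              ∘ₗ permTensorMap k V r σ⁻¹ := by rw [LinearMap.comp_assoc]
        _ = (permTensorMap k V r σ ∘ₗ PiTensorProduct.map f) ∘ₗ permTensorMap k V r σ⁻¹ := by
            rw [permTensorMap_conj]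
        _ = permTensorMap k V r σ ∘ₗ PiTensorProduct.map f ∘ₗ permTensorMap k V r σ⁻¹ := by
            rw [LinearMap.comp_assoc]
  | add u v hu hv =>
      rw [map_add, map_add, hu, hv, map_add, LinearMap.add_comp, LinearMap.comp_add]

theorem span_tprod_basis {ι : Type*} [Fintype ι] [DecidableEq ι] (b : Module.Basis ι k V) :
    Submodule.span k (Set.range fun I : Fin r → ι => tprod k (fun i => b (I i)))
      = (⊤ : Submodule k (⨂[k] (_ : Fin r), V)) := by
  rw [eq_top_iff, ← PiTensorProduct.span_tprod_eq_top, Submodule.span_le]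
  rintro _ ⟨v, rfl⟩
  have step : tprod k v
      = ∑ q ∈ Fintype.piFinset (fun _ : Fin r => (Finset.univ : Finset ι)),
          (∏ i, b.repr (v i) (q i)) • tprod k (fun i => b (q i)) := by
    calc tprod k v
        = tprod k (fun i => ∑ j ∈ (Finset.univ : Finset ι), b.repr (v i) j • b j) := by
          congr 1
          funext i
          exact (b.sum_repr (v i)).symm
      _ = ∑ q ∈ Fintype.piFinset (fun _ : Fin r => (Finset.univ : Finset ι)),
            tprod k (fun i => b.repr (v i) (q i) • b (q i)) :=
          MultilinearMap.map_sum_finset (PiTensorProduct.tprod k)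
            (fun i j => b.repr (v i) j • b j) (fun _ => Finset.univ)
      _ = ∑ q ∈ Fintype.piFinset (fun _ : Fin r => (Finset.univ : Finset ι)),
            (∏ i, b.repr (v i) (q i)) • tprod k (fun i => b (q i)) := by
          refine Finset.sum_congr rfl fun q _ => ?_
          exact MultilinearMap.map_smul_univ (PiTensorProduct.tprod k)
            (fun i => b.repr (v i) (q i)) (fun i => b (q i))
  rw [SetLike.mem_coe, step]
  exact Submodule.sum_mem _ fun q _ =>
    Submodule.smul_mem _ _ (Submodule.subset_span ⟨q, rfl⟩)

theorem piTensorHomMap_surjective [FiniteDimensional k V]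
    (S : (⨂[k] (_ : Fin r), V) →ₗ[k] ⨂[k] (_ : Fin r), V) :
    ∃ t : ⨂[k] (_ : Fin r), (V →ₗ[k] V), piTensorHomMap t = S := by
  classical
  set n := Module.finrank k V with hn
  set b : Module.Basis (Fin n) k V := Module.finBasis k V with hb
  set w : (Fin r → Fin n) → ⨂[k] (_ : Fin r), V := fun I => tprod k (fun i => b (I i)) with hw
  have hspan : Submodule.span k (Set.range w) = ⊤ := span_tprod_basis b
  set φ : (Fin r → Fin n) → ((⨂[k] (_ : Fin r), V) →ₗ[k] k) := fun J =>
    PiTensorProduct.lift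
      ((MultilinearMap.mkPiAlgebra k (Fin r) k).compLinearMap (fun i => b.coord (J i))) with hφ
  have hφw : ∀ J I, φ J (w I) = if J = I then 1 else 0 := by
    intro J I
    have h1 : φ J (w I) = ∏ i, b.coord (J i) (b (I i)) := by
      simp [hφ, hw, PiTensorProduct.lift.tprod]
    rw [h1]
    by_cases h : J = I
    · subst h
      rw [if_pos rfl]
      refine Finset.prod_eq_one fun i _ => ?_
      simp [Module.Basis.coord_apply, Module.Basis.repr_self]
    · rw [if_neg h]
      obtain ⟨i, hi⟩ : ∃ i, J i ≠ I i := by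
        by_contra hcon
        push_neg at hcon
        exact h (funext hcon)
      refine Finset.prod_eq_zero (Finset.mem_univ i) ?_
      simp [Module.Basis.coord_apply, Module.Basis.repr_self, Finsupp.single_apply]
      intro he
      exact absurd he.symm hi
  have hrank1 : ∀ (J : Fin r → Fin n) (u : ⨂[k] (_ : Fin r), V),
      (φ J).smulRight u ∈ LinearMap.range
        (piTensorHomMap : (⨂[k] (_ : Fin r), (V →ₗ[k] V)) →ₗ[k] _) := by
    intro J u
    have hu : u ∈ Submodule.span k (Set.range w) := hspan ▸ Submodule.mem_top
    induction hu using Submodule.span_induction with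
    | mem z hz =>
        obtain ⟨I, rfl⟩ := hz
        refine ⟨tprod k (fun i => (b.coord (J i)).smulRight (b (I i))), ?_⟩
        apply PiTensorProduct.ext
        apply MultilinearMap.ext
        intro v
        simp only [LinearMap.compMultilinearMap_apply, piTensorHomMap_tprod_tprod,
          LinearMap.smulRight_apply]
        rw [MultilinearMap.map_smul_univ (PiTensorProduct.tprod k)
          (fun i => b.coord (J i) (v i)) (fun i => b (I i))]
        simp [hφ, hw, PiTensorProduct.lift.tprod]
    | zero =>
        refine ⟨0, ?_⟩
        apply LinearMap.ext
        intro z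
        simp
    | add y z _ _ hy hz =>
        obtain ⟨ty, hty⟩ := hy
        obtain ⟨tz, htz⟩ := hz
        refine ⟨ty + tz, ?_⟩
        apply LinearMap.ext
        intro u'
        have : (φ J).smulRight (y + z) = (φ J).smulRight y + (φ J).smulRight z := by
          apply LinearMap.ext
          intro u''
          simp [smul_add]
        rw [map_add, this, hty, htz]
    | smul c y _ hy =>
        obtain ⟨ty, hty⟩ := hy
        refine ⟨c • ty, ?_⟩
        have : (φ J).smulRight (c • y) = c • (φ J).smulRight y := by
          apply LinearMap.ext
          intro u''
          rw [LinearMap.smulRight_apply, LinearMap.smul_apply, LinearMap.smulRight_apply,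
            smul_comm]
        rw [map_smul, this, hty]
  have hS : S = ∑ J : Fin r → Fin n, (φ J).smulRight (S (w J)) := by
    symm
    apply LinearMap.ext_on_range hspan
    intro I
    rw [LinearMap.sum_apply]
    simp only [LinearMap.smulRight_apply]
    rw [Finset.sum_congr rfl (fun J _ => by rw [hφw J I])]
    simp [ite_smul]
  rw [hS]
  have : (∑ J : Fin r → Fin n, (φ J).smulRight (S (w J))) ∈ LinearMap.range
      (piTensorHomMap : (⨂[k] (_ : Fin r), (V →ₗ[k] V)) →ₗ[k] _) :=
    Submodule.sum_mem _ fun J _ => hrank1 J (S (w J))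
  exact this

section FinDim
variable [FiniteDimensional k V] [Infinite k]

theorem tprod_const_mem_span_equiv (x : V →ₗ[k] V) :
    tprod k (fun _ : Fin r => x) ∈ Submodule.span k
      (Set.range fun g : V ≃ₗ[k] V => tprod k (fun _ : Fin r => (g : V →ₗ[k] V))) := by
  classical
  -- infinitely many `c` such that `x + c • id` is invertible
  have hbadfin : Set.Finite {c : k | Module.End.HasEigenvalue (x : Module.End k V) (-c)} := by
    have h1 : Set.Finite {μ : k | Module.End.HasEigenvalue (x : Module.End k V) μ} :=
      Module.End.finite_hasEigenvalue (x : Module.End k V)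
    have : {c : k | Module.End.HasEigenvalue (x : Module.End k V) (-c)}
        = Neg.neg ⁻¹' {μ : k | Module.End.HasEigenvalue (x : Module.End k V) μ} := rfl
    rw [this]
    exact Set.Finite.preimage (Set.injOn_of_injective neg_injective) h1
  have hgood : Set.Infinite {c : k | ¬ Module.End.HasEigenvalue (x : Module.End k V) (-c)} := by
    have := hbadfin.infinite_compl
    convert this using 1
    rfl
  obtain ⟨t, hts, htcard⟩ := hgood.exists_subset_card_eq (r + 1)
  have e : (t : Finset k) ≃ Fin (r + 1) := t.equivFinOfCardEq htcard
  set c : Fin (r + 1) → k := fun i => (e.symm i : k) with hc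
  have hcinj : Function.Injective c := by
    intro i j hij
    have := Subtype.val_injective hij
    exact e.symm.injective this
  have hcgood : ∀ i, ¬ Module.End.HasEigenvalue (x : Module.End k V) (-(c i)) := by
    intro i
    exact hts (e.symm i).2
  -- invertibility of x + c i • id
  have hbij : ∀ i, Function.Bijective (x + c i • LinearMap.id : V →ₗ[k] V) := by
    intro i
    have hker : LinearMap.ker (x + c i • LinearMap.id : V →ₗ[k] V) = ⊥ := by
      rw [LinearMap.ker_eq_bot']
      intro v hv
      by_contra hvne
      apply hcgood i
      apply Module.End.hasEigenvalue_of_hasEigenvector (x := v)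
      refine ⟨?_, hvne⟩
      rw [Module.End.mem_eigenspace_iff]
      have : x v + c i • v = 0 := by simpa using hv
      have : x v = -(c i) • v := by
        rw [neg_smul]
        linear_combination (norm := module) this
      exact this
    have hinj := LinearMap.ker_eq_bot.mp hker
    exact ⟨hinj, (LinearMap.injective_iff_surjective).mp hinj⟩
  set g : Fin (r + 1) → (V ≃ₗ[k] V) := fun i => LinearEquiv.ofBijective _ (hbij i) with hg
  have hgcoe : ∀ i, (g i : V →ₗ[k] V) = x + c i • LinearMap.id := fun i => rfl
  -- expansion of tprod (x + c • id)
  set base : Finset (Fin r) → (Fin r → (V →ₗ[k] V)) :=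
    fun s => s.piecewise (fun _ => x) (fun _ => LinearMap.id) with hbase
  have expand : ∀ cc : k, tprod k (fun _ : Fin r => x + cc • LinearMap.id)
      = ∑ s : Finset (Fin r), cc ^ (r - s.card) • tprod k (base s) := by
    intro cc
    have h1 : (fun _ : Fin r => x + cc • LinearMap.id)
        = (fun _ : Fin r => x) + (fun _ : Fin r => cc • LinearMap.id) := rfl
    rw [h1, MultilinearMap.map_add_univ (PiTensorProduct.tprod k)]
    refine Finset.sum_congr rfl fun s _ => ?_
    have h2 : s.piecewise (fun _ : Fin r => x) (fun _ : Fin r => cc • LinearMap.id)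
        = sᶜ.piecewise (fun i => cc • base s i) (base s) := by
      funext i
      by_cases hi : i ∈ s <;>
        simp [Finset.piecewise, hbase, hi]
    rw [h2, MultilinearMap.map_piecewise_smul (PiTensorProduct.tprod k) (fun _ => cc) (base s) sᶜ,
      Finset.prod_const, Finset.card_compl, Fintype.card_fin]
  -- group by cardinality
  set d : ℕ → (⨂[k] (_ : Fin r), (V →ₗ[k] V)) :=
    fun j => ∑ s ∈ Finset.univ.filter (fun s : Finset (Fin r) => s.card = j), tprod k (base s)
    with hd
  have expand2 : ∀ cc : k, tprod k (fun _ : Fin r => x + cc • LinearMap.id)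
      = ∑ j ∈ Finset.range (r + 1), cc ^ (r - j) • d j := by
    intro cc
    rw [expand cc]
    rw [← Finset.sum_fiberwise_of_maps_to (g := Finset.card)
      (t := Finset.range (r + 1)) (fun s _ => Finset.mem_range.mpr
        (Nat.lt_succ_of_le (by simpa using Finset.card_le_card (Finset.subset_univ s))))]
    refine Finset.sum_congr rfl fun j _ => ?_
    rw [hd, Finset.smul_sum]
    refine Finset.sum_congr rfl fun s hs => ?_
    rw [(Finset.mem_filter.mp hs).2]
  -- reflect the exponent
  set ee : ℕ → (⨂[k] (_ : Fin r), (V →ₗ[k] V)) := fun j => d (r - j) with hee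
  have expand3 : ∀ cc : k, tprod k (fun _ : Fin r => x + cc • LinearMap.id)
      = ∑ j : Fin (r + 1), cc ^ (j : ℕ) • ee j := by
    intro cc
    rw [expand2 cc]
    rw [Fin.sum_univ_eq_sum_range (fun j => cc ^ j • ee j) (r + 1)]
    rw [← Finset.sum_range_reflect (fun j => cc ^ j • ee j) (r + 1)]
    refine Finset.sum_congr rfl fun j hj => ?_
    have hjr : j ≤ r := Nat.lt_succ_iff.mp (Finset.mem_range.mp hj)
    have h1 : r + 1 - 1 - j = r - j := by omega
    have h2 : r - (r - j) = j := by omega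
    rw [h1]
    simp only [hee, h2]
  have he0 : ee 0 = tprod k (fun _ : Fin r => x) := by
    have huniv : Finset.univ.filter (fun s : Finset (Fin r) => s.card = r)
        = {(Finset.univ : Finset (Fin r))} := by
      ext s
      simp only [Finset.mem_filter, Finset.mem_univ, true_and, Finset.mem_singleton]
      constructor
      · intro h
        apply Finset.eq_univ_of_card
        rw [h, Fintype.card_fin]
      · rintro rfl
        simp
    simp only [hee, Nat.sub_zero, hd]
    rw [huniv, Finset.sum_singleton]
    simp only [hbase, Finset.piecewise_univ]
  -- Vandermonde inversion
  set A : Matrix (Fin (r + 1)) (Fin (r + 1)) k := Matrix.vandermonde c with hA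
  have hdet : IsUnit A.det := by
    rw [hA, Matrix.det_vandermonde]
    apply isUnit_iff_ne_zero.mpr
    apply Finset.prod_ne_zero_iff.mpr
    intro i _
    apply Finset.prod_ne_zero_iff.mpr
    intro j hj
    have : i ≠ j := by
      intro h; subst h; simp [Finset.mem_Ioi] at hj
    exact sub_ne_zero.mpr fun hcc => this (hcinj hcc).symm
  have hBA : A⁻¹ * A = 1 := Matrix.nonsing_inv_mul A hdet
  have key : tprod k (fun _ : Fin r => x)
      = ∑ i : Fin (r + 1), A⁻¹ 0 i • tprod k (fun _ : Fin r => ((g i : V →ₗ[k] V))) := by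
    rw [← he0]
    have : ∀ i, tprod k (fun _ : Fin r => ((g i : V →ₗ[k] V)))
        = ∑ j : Fin (r + 1), (c i) ^ (j : ℕ) • ee j := by
      intro i
      rw [hgcoe i]
      exact expand3 (c i)
    calc ee 0 = ∑ j : Fin (r + 1), ((1 : Matrix (Fin (r+1)) (Fin (r+1)) k) 0 j) • ee j := by
          rw [Finset.sum_congr rfl (fun j _ => by rw [Matrix.one_apply])]
          simp
      _ = ∑ j : Fin (r + 1), ((A⁻¹ * A) 0 j) • ee j := by rw [hBA]
      _ = ∑ j : Fin (r + 1), ∑ i : Fin (r + 1), (A⁻¹ 0 i * A i j) • ee j := by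
          refine Finset.sum_congr rfl fun j _ => ?_
          rw [Matrix.mul_apply, Finset.sum_smul]
      _ = ∑ i : Fin (r + 1), ∑ j : Fin (r + 1), (A⁻¹ 0 i * A i j) • ee j := Finset.sum_comm
      _ = ∑ i : Fin (r + 1), A⁻¹ 0 i • tprod k (fun _ : Fin r => ((g i : V →ₗ[k] V))) := by
          refine Finset.sum_congr rfl fun i _ => ?_
          rw [this i, Finset.smul_sum]
          refine Finset.sum_congr rfl fun j _ => ?_
          rw [smul_smul, hA, Matrix.vandermonde_apply]
  rw [key]
  exact Submodule.sum_mem _ fun i _ =>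
    Submodule.smul_mem _ _ (Submodule.subset_span ⟨g i, rfl⟩)

theorem commutant_perm_mem [CharZero k]
    (S : (⨂[k] (_ : Fin r), V) →ₗ[k] ⨂[k] (_ : Fin r), V)
    (hS : ∀ σ : Equiv.Perm (Fin r), S ∘ₗ permTensorMap k V r σ = permTensorMap k V r σ ∘ₗ S) :
    S ∈ Submodule.span k (Set.range fun g : V ≃ₗ[k] V =>
      PiTensorProduct.map (fun _ : Fin r => (g : V →ₗ[k] V))) := by
  classical
  obtain ⟨t, ht⟩ := piTensorHomMap_surjective S
  have h1 : ∀ σ : Equiv.Perm (Fin r),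
      piTensorHomMap ((PiTensorProduct.reindex k (fun _ : Fin r => (V →ₗ[k] V)) σ) t) = S := by
    intro σ
    rw [piTensorHomMap_reindex, ht]
    calc permTensorMap k V r σ ∘ₗ S ∘ₗ permTensorMap k V r σ⁻¹
        = permTensorMap k V r σ ∘ₗ permTensorMap k V r σ⁻¹ ∘ₗ S := by rw [hS σ⁻¹]
      _ = (permTensorMap k V r σ ∘ₗ permTensorMap k V r σ⁻¹) ∘ₗ S := by
          rw [LinearMap.comp_assoc]
      _ = S := by rw [permTensorMap_inv_comp, LinearMap.id_comp]
  have h2 : ((r.factorial : k)) • S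
      = piTensorHomMap (∑ σ : Equiv.Perm (Fin r),
          (PiTensorProduct.reindex k (fun _ : Fin r => (V →ₗ[k] V)) σ) t) := by
    rw [map_sum, Finset.sum_congr rfl fun σ _ => h1 σ, Finset.sum_const, Finset.card_univ,
      Fintype.card_perm, Fintype.card_fin, Nat.cast_smul_eq_nsmul]
  have h3 := sum_perm_mem_span (k := k) (r := r) t
  have h4 : Submodule.span k
        {u : ⨂[k] (_ : Fin r), (V →ₗ[k] V) | ∃ x : V →ₗ[k] V, tprod k (fun _ : Fin r => x) = u}
      ≤ Submodule.span k (Set.range fun g : V ≃ₗ[k] V =>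
          tprod k (fun _ : Fin r => (g : V →ₗ[k] V))) := by
    rw [Submodule.span_le]
    rintro u ⟨x, rfl⟩
    exact tprod_const_mem_span_equiv x
  have h5 : piTensorHomMap (∑ σ : Equiv.Perm (Fin r),
        (PiTensorProduct.reindex k (fun _ : Fin r => (V →ₗ[k] V)) σ) t)
      ∈ Submodule.map
          (piTensorHomMap : (⨂[k] (_ : Fin r), (V →ₗ[k] V)) →ₗ[k] _)
          (Submodule.span k (Set.range fun g : V ≃ₗ[k] V =>
            tprod k (fun _ : Fin r => (g : V →ₗ[k] V)))) :=
    ⟨_, h4 h3, rfl⟩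
  rw [Submodule.map_span, ← Set.range_comp] at h5
  have h6 : ((piTensorHomMap : (⨂[k] (_ : Fin r), (V →ₗ[k] V)) →ₗ[k] _) ∘
        fun g : V ≃ₗ[k] V => tprod k (fun _ : Fin r => (g : V →ₗ[k] V)))
      = fun g : V ≃ₗ[k] V => PiTensorProduct.map (fun _ : Fin r => (g : V →ₗ[k] V)) :=
    funext fun g => piTensorHomMap_tprod_eq_map _
  rw [h6] at h5
  have hfac : (r.factorial : k) ≠ 0 := Nat.cast_ne_zero.mpr (Nat.factorial_ne_zero r)
  have hSeq : S = (r.factorial : k)⁻¹ • ((r.factorial : k) • S) := by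
    rw [smul_smul, inv_mul_cancel₀ hfac, one_smul]
  rw [hSeq, h2]
  exact Submodule.smul_mem _ _ h5

end FinDim
end ModV
end Fieldk
end SchurWeylAux

open SchurWeylAux in
/-- Schur–Weyl reciprocity, spanning part: every `GL(V)`-equivariant endomorphism of
`V^{⊗r}` lies in the span of the tensor-factor permutation operators `Φ(ρ)`, `ρ ∈ S_r`. -/
theorem stmt_8 (k : Type*) [Field k] [CharZero k] (V : Type*) [AddCommGroup V] [Module k V]
    [FiniteDimensional k V] (r : ℕ)
    (T : (⨂[k] (_ : Fin r), V) →ₗ[k] ⨂[k] (_ : Fin r), V)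
    (hT : ∀ g : V ≃ₗ[k] V,
      T ∘ₗ PiTensorProduct.map (fun _ : Fin r => (g : V →ₗ[k] V))
        = PiTensorProduct.map (fun _ : Fin r => (g : V →ₗ[k] V)) ∘ₗ T) :
    T ∈ Submodule.span k (Set.range fun ρ : Equiv.Perm (Fin r) => permTensorMap k V r ρ) := by
  classical
  set W := (⨂[k] (_ : Fin r), V) with hW
  set A : Submodule k (W →ₗ[k] W) :=
    Submodule.span k (Set.range fun ρ : Equiv.Perm (Fin r) => permTensorMap k V r ρ) with hA
  show T ∈ A
  -- A is closed under left composition with permutation operators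
  have hAmul : ∀ (σ : Equiv.Perm (Fin r)), ∀ a ∈ A, permTensorMap k V r σ ∘ₗ a ∈ A := by
    intro σ a ha
    induction ha using Submodule.span_induction with
    | mem f hf =>
        obtain ⟨τ, rfl⟩ := hf
        rw [← permTensorMap_mul]
        exact Submodule.subset_span ⟨σ * τ, rfl⟩
    | zero => rw [LinearMap.comp_zero]; exact A.zero_mem
    | add f g _ _ hf hg => rw [LinearMap.comp_add]; exact A.add_mem hf hg
    | smul c f _ hf => rw [LinearMap.comp_smul]; exact A.smul_mem c hf
  -- T commutes with anything commuting with all permutation operators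
  have hTcomm : ∀ P : W →ₗ[k] W,
      (∀ σ : Equiv.Perm (Fin r), P ∘ₗ permTensorMap k V r σ = permTensorMap k V r σ ∘ₗ P) →
      T ∘ₗ P = P ∘ₗ T := by
    intro P hP
    have hPmem := commutant_perm_mem P hP
    refine commute_span ?_ P hPmem
    rintro f ⟨g, rfl⟩
    exact hT g
  -- spanning family of W
  set n := Module.finrank k V with hn
  set b : Module.Basis (Fin n) k V := Module.finBasis k V with hb
  set w : (Fin r → Fin n) → W := fun I => tprod k (fun i => b (I i)) with hw
  have hspan : Submodule.span k (Set.range w) = ⊤ := span_tprod_basis b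
  -- the group action on tuples
  have hone : ∀ y : (Fin r → Fin n) → W,
      LinearMap.compLeft (permTensorMap k V r 1) (Fin r → Fin n) y = y := by
    intro y
    funext I
    rw [permTensorMap_one]
    rfl
  set ρn : Equiv.Perm (Fin r) →* Module.End k ((Fin r → Fin n) → W) :=
    { toFun := fun σ => LinearMap.compLeft (permTensorMap k V r σ) (Fin r → Fin n),
      map_one' := by
        apply LinearMap.ext
        intro y
        exact hone y
      map_mul' := by
        intro σ τ
        apply LinearMap.ext
        intro y
        funext I
        show permTensorMap k V r (σ * τ) (y I)
          = permTensorMap k V r σ (permTensorMap k V r τ (y I))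
        rw [permTensorMap_mul]
        rfl } with hρn
  -- the cyclic submodule generated by w
  set L : (W →ₗ[k] W) →ₗ[k] ((Fin r → Fin n) → W) :=
    LinearMap.pi (fun I => LinearMap.applyₗ (w I)) with hL
  set N : Submodule k ((Fin r → Fin n) → W) := Submodule.map L A with hN
  have hNinv : ∀ (σ : Equiv.Perm (Fin r)) (y : (Fin r → Fin n) → W), y ∈ N → ρn σ y ∈ N := by
    rintro σ y ⟨a, ha, rfl⟩
    exact ⟨permTensorMap k V r σ ∘ₗ a, hAmul σ a ha, rfl⟩
  have hcard : ((Fintype.card (Equiv.Perm (Fin r)) : k)) ≠ 0 :=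
    Nat.cast_ne_zero.mpr Fintype.card_ne_zero
  obtain ⟨π, hπ1, hπ2, hπ3⟩ := maschke hcard ρn N hNinv
  -- matrix entries of π
  set πe : (Fin r → Fin n) → (Fin r → Fin n) → (W →ₗ[k] W) := fun I J =>
    LinearMap.proj I ∘ₗ π ∘ₗ LinearMap.single k (fun _ : Fin r → Fin n => W) J with hπe
  have hsingle : ∀ (σ : Equiv.Perm (Fin r)) (J) (x : W),
      LinearMap.single k (fun _ : Fin r → Fin n => W) J (permTensorMap k V r σ x)
        = ρn σ (LinearMap.single k (fun _ : Fin r → Fin n => W) J x) := by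
    intro σ J x
    have hρnapp : ∀ (σ : Equiv.Perm (Fin r)) (y : (Fin r → Fin n) → W) (I : Fin r → Fin n),
        ρn σ y I = permTensorMap k V r σ (y I) := fun _ _ _ => rfl
    funext i
    rw [hρnapp, LinearMap.single_apply, LinearMap.single_apply]
    by_cases h : i = J
    · subst h; simp
    · simp [Pi.single_eq_of_ne h]
  have hcommπe : ∀ I J (σ : Equiv.Perm (Fin r)),
      πe I J ∘ₗ permTensorMap k V r σ = permTensorMap k V r σ ∘ₗ πe I J := by
    intro I J σ
    apply LinearMap.ext
    intro x
    show (π (LinearMap.single k (fun _ : Fin r → Fin n => W) J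
        (permTensorMap k V r σ x))) I
      = permTensorMap k V r σ ((π (LinearMap.single k (fun _ : Fin r → Fin n => W) J x)) I)
    rw [hsingle σ J x]
    have := LinearMap.congr_fun (hπ3 σ) (LinearMap.single k (fun _ : Fin r → Fin n => W) J x)
    rw [LinearMap.comp_apply, LinearMap.comp_apply] at this
    rw [this]
    rfl
  have hTπe : ∀ I J, T ∘ₗ πe I J = πe I J ∘ₗ T := fun I J => hTcomm (πe I J) (hcommπe I J)
  -- decomposition of π through its entries
  have hdecomp : ∀ (y : (Fin r → Fin n) → W) I, π y I = ∑ J, πe I J (y J) := by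
    intro y I
    conv_lhs => rw [← Finset.univ_sum_single y, map_sum]
    rw [Finset.sum_apply]
    rfl
  -- w belongs to N
  have hidA : (LinearMap.id : W →ₗ[k] W) ∈ A := by
    rw [← permTensorMap_one (k := k) (V := V) (r := r)]
    exact Submodule.subset_span ⟨1, rfl⟩
  have hwN : w ∈ N := ⟨LinearMap.id, hidA, rfl⟩
  have hπw : π w = w := hπ2 w hwN
  -- the vector u = T ∘ w is fixed by π
  set u : (Fin r → Fin n) → W := fun I => T (w I) with hu
  have hπu : π u = u := by
    funext I
    rw [hdecomp u I]
    calc ∑ J, πe I J (T (w J))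
        = ∑ J, T (πe I J (w J)) := by
          refine Finset.sum_congr rfl fun J _ => ?_
          have := LinearMap.congr_fun (hTπe I J) (w J)
          rw [LinearMap.comp_apply, LinearMap.comp_apply] at this
          exact this.symm
      _ = T (∑ J, πe I J (w J)) := by rw [map_sum]
      _ = T (π w I) := by rw [← hdecomp w I]
      _ = u I := by rw [hπw]
  have huN : u ∈ N := by
    rw [← hπu]
    exact hπ1 u
  obtain ⟨a, haA, haL⟩ := huN
  have : T = a := by
    symm
    apply LinearMap.ext_on_range hspan
    intro I
    have := congrFun haL I
    exact this
  rw [this]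
  exact haA
end

section
/- Schur–Weyl reciprocity (linear independence part): if dim V ≥ r, the operators Φ(ρ) ∈ End(V^{⊗r}) for ρ ∈ S_r are linearly independent; hence if also spanning holds, they form a basis of End_{GL(V)}(V^{⊗r}). -/
open PiTensorProduct
open scoped TensorProduct

/-- Schur–Weyl reciprocity, linear independence part: if `dim V ≥ r`, the operators
`Φ(ρ)` for `ρ ∈ S_r` are linearly independent. -/
theorem stmt_9 (k : Type*) [Field k] [CharZero k] (V : Type*) [AddCommGroup V] [Module k V]
    [FiniteDimensional k V] (r : ℕ) (hr : r ≤ Module.finrank k V) :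
    LinearIndependent k (fun ρ : Equiv.Perm (Fin r) => permTensorMap k V r ρ) := by
  classical
  rw [Fintype.linearIndependent_iff]
  intro c hc ρ₀
  set n := Module.finrank k V with hn
  let b : Module.Basis (Fin n) k V := Module.finBasis k V
  -- the test vector
  let x : ⨂[k] (_ : Fin r), V := tprod k fun i => b (Fin.castLE hr i)
  -- dual functional picking the coefficient of the basis tensor indexed by h
  let φ : (Fin r → Fin n) → ((⨂[k] (_ : Fin r), V) →ₗ[k] k) := fun h =>
    PiTensorProduct.lift
      ((MultilinearMap.mkPiAlgebra k (Fin r) k).compLinearMap fun i => b.coord (h i))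
  have hφ : ∀ (h : Fin r → Fin n) (f : Fin r → V),
      φ h (tprod k f) = ∏ i, b.coord (h i) (f i) := by
    intro h f
    simp [φ, PiTensorProduct.lift.tprod]
  -- apply the hypothesis to x, then the functional φ (g ρ₀)
  let g : Equiv.Perm (Fin r) → (Fin r → Fin n) := fun ρ i => Fin.castLE hr (ρ.symm i)
  have hx : ∀ ρ : Equiv.Perm (Fin r), permTensorMap k V r ρ x = tprod k fun i => b (g ρ i) := by
    intro ρ
    simp [permTensorMap, x, PiTensorProduct.reindex_tprod, g]
  have h0 : (∑ ρ : Equiv.Perm (Fin r), c ρ • permTensorMap k V r ρ) x = 0 := by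
    rw [hc]; rfl
  have h1 : ∑ ρ : Equiv.Perm (Fin r), c ρ * φ (g ρ₀) (tprod k fun i => b (g ρ i)) = 0 := by
    have := congrArg (φ (g ρ₀)) h0
    simpa [LinearMap.sum_apply, LinearMap.smul_apply, map_sum, hx, smul_eq_mul] using this
  have hcoord : ∀ j j' : Fin n, b.coord j (b j') = if j' = j then (1 : k) else 0 := by
    intro j j'
    simp [Module.Basis.coord_apply, Module.Basis.repr_self, Finsupp.single_apply]
  have hterm : ∀ ρ : Equiv.Perm (Fin r),
      φ (g ρ₀) (tprod k fun i => b (g ρ i)) = if ρ = ρ₀ then (1 : k) else 0 := by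
    intro ρ
    rw [hφ]
    by_cases hρ : ρ = ρ₀
    · subst hρ; simp [hcoord]
    · rw [if_neg hρ]
      have : ∃ i, g ρ i ≠ g ρ₀ i := by
        by_contra hall
        push_neg at hall
        apply hρ
        have hsymm : ρ.symm = ρ₀.symm := by
          ext i
          exact congrArg Fin.val (Fin.castLE_injective hr (hall i))
        calc ρ = ρ.symm.symm := rfl
          _ = ρ₀.symm.symm := by rw [hsymm]
          _ = ρ₀ := rfl
      obtain ⟨i, hi⟩ := this
      apply Finset.prod_eq_zero (Finset.mem_univ i)
      rw [hcoord]
      exact if_neg hi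
  rw [Finset.sum_congr rfl (fun ρ _ => by rw [hterm ρ])] at h1
  simpa using h1
end
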